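/- arXiv:1103.4479 — 6 statements merged into one kernel-verified Lean document; each statement's English description precedes it below -/
import Mathlib

section
/- If S, E, I, R satisfy the SEIR system with nonnegative parameters μ, ω, β, σ, γ ≥ 0, N > 0, vaccination V(t) ∈ [0,1] for all t ≥ 0, and nonnegative initial conditions min(S(0),E(0),I(0),R(0)) ≥ 0, then S(t), E(t), I(t), R(t) ≥ 0 for all t ≥ 0. -/
/-- If `f` has derivative `f'` at `a > 0`, vanishes at `a`, and is nonnegative on `[0, a)`,
then `f' ≤ 0`. -/
lemma seir_deriv_nonpos_of_left_min {f : ℝ → ℝ} {a f' : ℝ} (ha : 0 < a)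
    (hf : HasDerivAt f f' a) (h0 : f a = 0)
    (hpos : ∀ s, 0 ≤ s → s < a → 0 ≤ f s) : f' ≤ 0 := by
  have h := hasDerivAt_iff_tendsto_slope.mp hf
  have h' : Filter.Tendsto (slope f a) (nhdsWithin a (Set.Iio a)) (nhds f') :=
    h.mono_left (nhdsWithin_mono a (fun x hx => ne_of_lt hx))
  refine le_of_tendsto h' ?_
  filter_upwards [Ioo_mem_nhdsLT_of_mem (Set.mem_Ioc.mpr ⟨ha, le_refl a⟩)] with s hs
  rw [slope_def_field, h0, sub_zero]
  exact div_nonpos_of_nonneg_of_nonpos (hpos s hs.1.le hs.2) (by linarith [hs.2])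

lemma seir_mul_lower {x y P M : ℝ} (hP : 0 ≤ P) (hM : 0 ≤ M) (hx : -P ≤ x) (hy : -P ≤ y)
    (hxM : x ≤ M) (hyM : y ≤ M) : -(P * M) ≤ x * y := by
  rcases le_or_gt 0 x with h | h
  · nlinarith [mul_nonneg h (show (0:ℝ) ≤ y + P by linarith), mul_nonneg hP (show (0:ℝ) ≤ M - x by linarith)]
  · rcases le_or_gt 0 y with h2 | h2
    · nlinarith [mul_nonneg h2 (show (0:ℝ) ≤ x + P by linarith), mul_nonneg hP (show (0:ℝ) ≤ M - y by linarith)]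
    · nlinarith [mul_pos_of_neg_of_neg h h2, mul_nonneg hP hM]

/-- Positivity of the SEIR model under vaccination `V` valued in `[0,1]`. -/
theorem seir_positivity
    (μ ω β σ γ N : ℝ) (S E I R V : ℝ → ℝ)
    (hμ : 0 ≤ μ) (hω : 0 ≤ ω) (hβ : 0 ≤ β) (hσ : 0 ≤ σ) (hγ : 0 ≤ γ)
    (hN : N = S 0 + E 0 + I 0 + R 0) (hNpos : 0 < N)
    (hVc : Continuous V) (hV : ∀ t, 0 ≤ t → V t ∈ Set.Icc (0 : ℝ) 1)
    (hS : Differentiable ℝ S) (hE : Differentiable ℝ E)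
    (hI : Differentiable ℝ I) (hR : Differentiable ℝ R)
    (hS' : ∀ t, 0 ≤ t → deriv S t = -μ * S t + ω * R t - (β / N) * S t * I t + μ * N * (1 - V t))
    (hE' : ∀ t, 0 ≤ t → deriv E t = (β / N) * S t * I t - (μ + σ) * E t)
    (hI' : ∀ t, 0 ≤ t → deriv I t = -(μ + γ) * I t + σ * E t)
    (hR' : ∀ t, 0 ≤ t → deriv R t = -(μ + ω) * R t + γ * I t + μ * N * V t)
    (hS0 : 0 ≤ S 0) (hE0 : 0 ≤ E 0) (hI0 : 0 ≤ I 0) (hR0 : 0 ≤ R 0) :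
    ∀ t, 0 ≤ t → 0 ≤ S t ∧ 0 ≤ E t ∧ 0 ≤ I t ∧ 0 ≤ R t := by
  intro t ht
  set c := β / N with hc_def
  have hc : 0 ≤ c := div_nonneg hβ hNpos.le
  -- bound |S| and |I| on [0, t]
  obtain ⟨M₁, hM₁⟩ := isCompact_Icc.exists_bound_of_continuousOn
    (hS.continuous.continuousOn (s := Set.Icc 0 t))
  obtain ⟨M₂, hM₂⟩ := isCompact_Icc.exists_bound_of_continuousOn
    (hI.continuous.continuousOn (s := Set.Icc 0 t))
  set M : ℝ := max (max M₁ M₂) 0 with hM_def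
  have hM0 : 0 ≤ M := le_max_right _ _
  have hSM : ∀ s ∈ Set.Icc (0:ℝ) t, |S s| ≤ M := by
    intro s hs
    calc |S s| = ‖S s‖ := (Real.norm_eq_abs _).symm
    _ ≤ M₁ := hM₁ s hs
    _ ≤ M := le_max_of_le_left (le_max_left _ _)
  have hIM : ∀ s ∈ Set.Icc (0:ℝ) t, |I s| ≤ M := by
    intro s hs
    calc |I s| = ‖I s‖ := (Real.norm_eq_abs _).symm
    _ ≤ M₂ := hM₂ s hs
    _ ≤ M := le_max_of_le_left (le_max_right _ _)
  set K : ℝ := 1 + ω + σ + γ + c * M with hK_def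
  -- key claim
  have key : ∀ ε : ℝ, 0 < ε → ∀ s ∈ Set.Icc (0:ℝ) t,
      0 < S s + ε * Real.exp (K * s) ∧ 0 < E s + ε * Real.exp (K * s) ∧
      0 < I s + ε * Real.exp (K * s) ∧ 0 < R s + ε * Real.exp (K * s) := by
    intro ε hε
    by_contra hcon
    push_neg at hcon
    obtain ⟨s₀, hs₀, hbad⟩ := hcon
    -- hbad : each conj chain; convert to disjunction of ≤ 0
    set B : Set ℝ := Set.Icc 0 t ∩
      ((fun s => S s + ε * Real.exp (K * s)) ⁻¹' Set.Iic 0 ∪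
       (fun s => E s + ε * Real.exp (K * s)) ⁻¹' Set.Iic 0 ∪
       (fun s => I s + ε * Real.exp (K * s)) ⁻¹' Set.Iic 0 ∪
       (fun s => R s + ε * Real.exp (K * s)) ⁻¹' Set.Iic 0) with hB_def
    have hmemB : ∀ s, s ∈ B ↔ s ∈ Set.Icc (0:ℝ) t ∧
        (S s + ε * Real.exp (K * s) ≤ 0 ∨ E s + ε * Real.exp (K * s) ≤ 0 ∨
         I s + ε * Real.exp (K * s) ≤ 0 ∨ R s + ε * Real.exp (K * s) ≤ 0) := by
      intro s
      simp [hB_def, Set.mem_preimage, Set.mem_union, or_assoc]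
    have hexpc : Continuous fun s : ℝ => ε * Real.exp (K * s) := by
      exact continuous_const.mul (Real.continuous_exp.comp (continuous_const.mul continuous_id))
    have hBclosed : IsClosed B := by
      refine isClosed_Icc.inter ?_
      exact (((isClosed_Iic.preimage (hS.continuous.add hexpc)).union
        (isClosed_Iic.preimage (hE.continuous.add hexpc))).union
        (isClosed_Iic.preimage (hI.continuous.add hexpc))).union
        (isClosed_Iic.preimage (hR.continuous.add hexpc))
    have hBne : B.Nonempty := by
      refine ⟨s₀, (hmemB s₀).mpr ⟨hs₀, ?_⟩⟩
      by_contra h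
      push_neg at h
      obtain ⟨h1, h2, h3, h4⟩ := h
      exact absurd (hbad h1 h2 h3) (not_le.mpr h4)
    have hBbdd : BddBelow B := ⟨0, fun x hx => ((hmemB x).mp hx).1.1⟩
    set t₁ : ℝ := sInf B with ht₁_def
    have ht₁B := (hmemB t₁).mp (hBclosed.csInf_mem hBne hBbdd)
    have ht₁0 : 0 ≤ t₁ := ht₁B.1.1
    have ht₁t : t₁ ≤ t := ht₁B.1.2
    have hzero0 : ∀ X : ℝ → ℝ, 0 ≤ X 0 → 0 < X 0 + ε * Real.exp (K * 0) := by
      intro X hX0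
      rw [mul_zero, Real.exp_zero, mul_one]
      linarith
    have ht₁pos : 0 < t₁ := by
      rcases lt_or_eq_of_le ht₁0 with h | h
      · exact h
      · exfalso
        rcases ht₁B.2 with h2 | h2 | h2 | h2 <;> rw [← h] at h2
        · exact absurd h2 (not_le.mpr (hzero0 S hS0))
        · exact absurd h2 (not_le.mpr (hzero0 E hE0))
        · exact absurd h2 (not_le.mpr (hzero0 I hI0))
        · exact absurd h2 (not_le.mpr (hzero0 R hR0))
    have hbefore : ∀ s, 0 ≤ s → s < t₁ →
        0 < S s + ε * Real.exp (K * s) ∧ 0 < E s + ε * Real.exp (K * s) ∧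
        0 < I s + ε * Real.exp (K * s) ∧ 0 < R s + ε * Real.exp (K * s) := by
      intro s hs0 hst₁
      have hsB : s ∉ B := fun hsB => absurd (csInf_le hBbdd hsB) (not_le.mpr hst₁)
      rw [hmemB] at hsB
      push_neg at hsB
      have := hsB ⟨hs0, le_trans hst₁.le ht₁t⟩
      exact ⟨this.1, this.2.1, this.2.2.1, this.2.2.2⟩
    -- each component is ≥ 0 at t₁ by continuity from the left
    have hleft : ∀ X : ℝ → ℝ, Continuous X →
        (∀ s, 0 ≤ s → s < t₁ → 0 < X s + ε * Real.exp (K * s)) →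
        0 ≤ X t₁ + ε * Real.exp (K * t₁) := by
      intro X hXc hXpos
      have htend : Filter.Tendsto (fun s => X s + ε * Real.exp (K * s))
          (nhdsWithin t₁ (Set.Iio t₁)) (nhds (X t₁ + ε * Real.exp (K * t₁))) :=
        ((hXc.add hexpc).tendsto t₁).mono_left nhdsWithin_le_nhds
      refine ge_of_tendsto htend ?_
      filter_upwards [Ioo_mem_nhdsLT_of_mem (Set.mem_Ioc.mpr ⟨ht₁pos, le_refl t₁⟩)] with s hs
      exact (hXpos s hs.1.le hs.2).le
    have hSt₁ : 0 ≤ S t₁ + ε * Real.exp (K * t₁) :=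
      hleft S hS.continuous (fun s h1 h2 => (hbefore s h1 h2).1)
    have hEt₁ : 0 ≤ E t₁ + ε * Real.exp (K * t₁) :=
      hleft E hE.continuous (fun s h1 h2 => (hbefore s h1 h2).2.1)
    have hIt₁ : 0 ≤ I t₁ + ε * Real.exp (K * t₁) :=
      hleft I hI.continuous (fun s h1 h2 => (hbefore s h1 h2).2.2.1)
    have hRt₁ : 0 ≤ R t₁ + ε * Real.exp (K * t₁) :=
      hleft R hR.continuous (fun s h1 h2 => (hbefore s h1 h2).2.2.2)
    -- the derivative bound for any component that vanishes at t₁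
    have hder : ∀ X : ℝ → ℝ, Differentiable ℝ X →
        (∀ s, 0 ≤ s → s < t₁ → 0 ≤ X s + ε * Real.exp (K * s)) →
        X t₁ + ε * Real.exp (K * t₁) = 0 →
        deriv X t₁ + ε * (Real.exp (K * t₁) * K) ≤ 0 := by
      intro X hXd hXpos hX0
      have h2 : HasDerivAt (fun s : ℝ => Real.exp (K * s)) (Real.exp (K * t₁) * K) t₁ := by
        simpa using ((hasDerivAt_id t₁).const_mul K).exp
      have hG : HasDerivAt (fun s => X s + ε * Real.exp (K * s))
          (deriv X t₁ + ε * (Real.exp (K * t₁) * K)) t₁ :=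
        (hXd t₁).hasDerivAt.add (h2.const_mul ε)
      exact seir_deriv_nonpos_of_left_min ht₁pos hG hX0 hXpos
    set P : ℝ := ε * Real.exp (K * t₁) with hP_def
    have hP : 0 < P := mul_pos hε (Real.exp_pos _)
    have hPK : P * K = P + P * ω + P * σ + P * γ + c * M * P := by
      rw [hK_def]; ring
    have hSabs := abs_le.mp (hSM t₁ ⟨ht₁0, ht₁t⟩)
    have hIabs := abs_le.mp (hIM t₁ ⟨ht₁0, ht₁t⟩)
    have hVb := hV t₁ ht₁0
    have hV0 : 0 ≤ V t₁ := hVb.1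
    have hV1 : V t₁ ≤ 1 := hVb.2
    rcases ht₁B.2 with h2 | h2 | h2 | h2
    · -- S component vanishes
      have hX0 : S t₁ + P = 0 := le_antisymm h2 hSt₁
      have hd := hder S hS (fun s a b => (hbefore s a b).1.le) hX0
      have hODE := hS' t₁ ht₁0
      have hSP : S t₁ = -P := by linarith
      rw [hSP] at hODE
      have hd' : deriv S t₁ + P * K ≤ 0 := by
        calc deriv S t₁ + P * K = deriv S t₁ + ε * (Real.exp (K * t₁) * K) := by
              rw [hP_def]; ring
        _ ≤ 0 := hd
      have hb1 : 0 ≤ ω * (R t₁ + P) := mul_nonneg hω (by linarith)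
      have hb2 : 0 ≤ c * P * (I t₁ + M) := mul_nonneg (mul_nonneg hc hP.le) (by linarith [hIabs.1])
      have hb3 : 0 ≤ μ * N * (1 - V t₁) := mul_nonneg (mul_nonneg hμ hNpos.le) (by linarith)
      have hb4 : 0 ≤ μ * P := mul_nonneg hμ hP.le
      have hb5 : 0 ≤ P * σ := mul_nonneg hP.le hσ
      have hb6 : 0 ≤ P * γ := mul_nonneg hP.le hγ
      linarith [hd', hODE, hPK, hb1, hb2, hb3, hb4, hb5, hb6, hP]
    · -- E component vanishes
      have hX0 : E t₁ + P = 0 := le_antisymm h2 hEt₁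
      have hd := hder E hE (fun s a b => (hbefore s a b).2.1.le) hX0
      have hODE := hE' t₁ ht₁0
      have hEP : E t₁ = -P := by linarith
      rw [hEP] at hODE
      have hd' : deriv E t₁ + P * K ≤ 0 := by
        calc deriv E t₁ + P * K = deriv E t₁ + ε * (Real.exp (K * t₁) * K) := by
              rw [hP_def]; ring
        _ ≤ 0 := hd
      have hml : -(P * M) ≤ S t₁ * I t₁ :=
        seir_mul_lower hP.le hM0 (by linarith) (by linarith) hSabs.2 hIabs.2
      have hb1 : 0 ≤ c * (S t₁ * I t₁ + P * M) := mul_nonneg hc (by linarith)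
      have hb2 : 0 ≤ (μ + σ) * P := mul_nonneg (by linarith) hP.le
      have hb3 : 0 ≤ P * ω := mul_nonneg hP.le hω
      have hb5 : 0 ≤ P * σ := mul_nonneg hP.le hσ
      have hb6 : 0 ≤ P * γ := mul_nonneg hP.le hγ
      linarith [hd', hODE, hPK, hb1, hb2, hb3, hb5, hb6, hP]
    · -- I component vanishes
      have hX0 : I t₁ + P = 0 := le_antisymm h2 hIt₁
      have hd := hder I hI (fun s a b => (hbefore s a b).2.2.1.le) hX0
      have hODE := hI' t₁ ht₁0
      have hIP : I t₁ = -P := by linarith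
      rw [hIP] at hODE
      have hd' : deriv I t₁ + P * K ≤ 0 := by
        calc deriv I t₁ + P * K = deriv I t₁ + ε * (Real.exp (K * t₁) * K) := by
              rw [hP_def]; ring
        _ ≤ 0 := hd
      have hb1 : 0 ≤ σ * (E t₁ + P) := mul_nonneg hσ (by linarith)
      have hb2 : 0 ≤ (μ + γ) * P := mul_nonneg (by linarith) hP.le
      have hb3 : 0 ≤ P * ω := mul_nonneg hP.le hω
      have hb6 : 0 ≤ P * γ := mul_nonneg hP.le hγ
      have hb7 : 0 ≤ c * M * P := mul_nonneg (mul_nonneg hc hM0) hP.le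
      linarith [hd', hODE, hPK, hb1, hb2, hb3, hb6, hb7, hP]
    · -- R component vanishes
      have hX0 : R t₁ + P = 0 := le_antisymm h2 hRt₁
      have hd := hder R hR (fun s a b => (hbefore s a b).2.2.2.le) hX0
      have hODE := hR' t₁ ht₁0
      have hRP : R t₁ = -P := by linarith
      rw [hRP] at hODE
      have hd' : deriv R t₁ + P * K ≤ 0 := by
        calc deriv R t₁ + P * K = deriv R t₁ + ε * (Real.exp (K * t₁) * K) := by
              rw [hP_def]; ring
        _ ≤ 0 := hd
      have hb1 : 0 ≤ γ * (I t₁ + P) := mul_nonneg hγ (by linarith)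
      have hb2 : 0 ≤ (μ + ω) * P := mul_nonneg (by linarith) hP.le
      have hb3 : 0 ≤ μ * N * V t₁ := mul_nonneg (mul_nonneg hμ hNpos.le) hV0
      have hb5 : 0 ≤ P * σ := mul_nonneg hP.le hσ
      have hb7 : 0 ≤ c * M * P := mul_nonneg (mul_nonneg hc hM0) hP.le
      have hb8 : 0 ≤ P * ω := mul_nonneg hP.le hω
      linarith [hd', hODE, hPK, hb1, hb2, hb3, hb5, hb7, hb8, hP]
  -- conclude by letting ε → 0
  have hE1 : (0:ℝ) < Real.exp (K * t) := Real.exp_pos _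
  have hfin : ∀ x : ℝ, (∀ ε : ℝ, 0 < ε → 0 < x + ε * Real.exp (K * t)) → 0 ≤ x := by
    intro x hx
    by_contra h
    push_neg at h
    have hx' : (0:ℝ) < -x := by linarith
    have hε : 0 < -x / (2 * Real.exp (K * t)) := div_pos hx' (by positivity)
    have := hx _ hε
    have heq : -x / (2 * Real.exp (K * t)) * Real.exp (K * t) = -x / 2 := by
      field_simp
    rw [heq] at this
    linarith
  have htt : t ∈ Set.Icc (0:ℝ) t := ⟨ht, le_refl t⟩
  exact ⟨hfin _ (fun ε hε => (key ε hε t htt).1),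
    hfin _ (fun ε hε => (key ε hε t htt).2.1),
    hfin _ (fun ε hε => (key ε hε t htt).2.2.1),
    hfin _ (fun ε hε => (key ε hε t htt).2.2.2)⟩
end

section
/- Under the SEIR system with V(t) ∈ [0,1], nonnegative parameters, and nonnegative initial populations summing to N > 0, each of S(t), E(t), I(t), R(t) lies in [0, N] for all t ≥ 0. -/
open Set Filter Real


open Set Filter Real

lemma negpart_sq_hasDerivAt (x : ℝ) :
    HasDerivAt (fun y : ℝ => (min y 0) ^ 2) (2 * min x 0) x := by
  rcases lt_trichotomy x 0 with hx | hx | hx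
  · have h : (fun y : ℝ => (min y 0) ^ 2) =ᶠ[nhds x] fun y => y ^ 2 := by
      filter_upwards [Iio_mem_nhds hx] with y hy
      simp [min_eq_left (Set.mem_Iio.mp hy).le]
    have := hasDerivAt_pow 2 x
    rw [min_eq_left hx.le]
    simpa using this.congr_of_eventuallyEq h
  · subst hx
    rw [min_self]
    simp only [mul_zero]
    rw [hasDerivAt_iff_isLittleO]
    simp only [min_self, ne_eq, zero_pow, smul_zero, sub_zero]
    rw [Asymptotics.isLittleO_iff]
    intro c hc
    filter_upwards [Metric.ball_mem_nhds (0:ℝ) hc] with y hy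
    simp only [Metric.mem_ball, Real.dist_eq, sub_zero] at hy
    have h1 : |min y 0| ≤ |y| := by
      rcases le_or_gt y 0 with h | h
      · simp [min_eq_left h]
      · simp [min_eq_right h.le, abs_nonneg]
    calc ‖(min y 0)^2 - 0^2‖ = |min y 0| * |min y 0| := by
          rw [Real.norm_eq_abs]; rw [sq, sq]; simp [abs_mul]
      _ ≤ |y| * |y| := mul_le_mul h1 h1 (abs_nonneg _) (abs_nonneg _)
      _ ≤ c * ‖y‖ := by
          rw [Real.norm_eq_abs]
          exact mul_le_mul_of_nonneg_right hy.le (abs_nonneg _)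
  · have h : (fun y : ℝ => (min y 0) ^ 2) =ᶠ[nhds x] fun _ => (0:ℝ) := by
      filter_upwards [Ioi_mem_nhds hx] with y hy
      simp [min_eq_right (Set.mem_Ioi.mp hy).le]
    rw [min_eq_right hx.le]
    simpa using (hasDerivAt_const x (0:ℝ)).congr_of_eventuallyEq h
set_option maxHeartbeats 400000

lemma seir_key_ineq (μ ω β σ γ N M Sx Ex Ix Rx Vx : ℝ)
    (hμ : 0 ≤ μ) (hω : 0 ≤ ω) (hβ : 0 ≤ β) (hσ : 0 ≤ σ) (hγ : 0 ≤ γ)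
    (hN : 0 < N) (hM : 0 ≤ M) (hV0 : 0 ≤ Vx) (hV1 : Vx ≤ 1)
    (hSb : |Sx| ≤ M) (hIb : |Ix| ≤ M) :
    2 * min Sx 0 * (-μ * Sx + ω * Rx - (β / N) * Sx * Ix + μ * N * (1 - Vx))
      + 2 * min Ex 0 * ((β / N) * Sx * Ix - (μ + σ) * Ex)
      + 2 * min Ix 0 * (-(μ + γ) * Ix + σ * Ex)
      + 2 * min Rx 0 * (-(μ + ω) * Rx + γ * Ix + μ * N * Vx)
    ≤ (ω + σ + γ + 4 * (β / N) * M) *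
        ((min Sx 0) ^ 2 + (min Ex 0) ^ 2 + (min Ix 0) ^ 2 + (min Rx 0) ^ 2) := by
  set s := min Sx 0 with hs_def
  set e := min Ex 0 with he_def
  set i := min Ix 0 with hi_def
  set r := min Rx 0 with hr_def
  have hc : 0 ≤ β / N := div_nonneg hβ hN.le
  have hs : s ≤ 0 := min_le_right _ _
  have he : e ≤ 0 := min_le_right _ _
  have hi : i ≤ 0 := min_le_right _ _
  have hr : r ≤ 0 := min_le_right _ _
  -- x * (min x 0) = (min x 0)^2
  have nn : ∀ a b : ℝ, a ≤ 0 → b ≤ 0 → 0 ≤ a * b := fun a b ha hb => by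
    have := mul_nonneg (neg_nonneg.2 ha) (neg_nonneg.2 hb)
    linarith [this]
  have sq_of_min : ∀ x : ℝ, min x 0 * x = (min x 0) ^ 2 := by
    intro x
    rcases le_total x 0 with h | h
    · rw [min_eq_left h]; ring
    · rw [min_eq_right h]; ring
  have pos_of_min : ∀ x : ℝ, 0 ≤ x - min x 0 := by
    intro x
    rcases le_total x 0 with h | h
    · rw [min_eq_left h]; linarith
    · rw [min_eq_right h]; linarith
  have eS : s * Sx = s ^ 2 := sq_of_min Sx
  have eE : e * Ex = e ^ 2 := sq_of_min Ex
  have eI : i * Ix = i ^ 2 := sq_of_min Ix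
  have eR : r * Rx = r ^ 2 := sq_of_min Rx
  have pS : 0 ≤ Sx - s := pos_of_min Sx
  have pE : 0 ≤ Ex - e := pos_of_min Ex
  have pI : 0 ≤ Ix - i := pos_of_min Ix
  have pR : 0 ≤ Rx - r := pos_of_min Rx
  have pSM : Sx - s ≤ M := by
    rcases le_total Sx 0 with h | h
    · rw [hs_def, min_eq_left h]; linarith
    · rw [hs_def, min_eq_right h]; simpa using (abs_le.mp hSb).2
  have pIM : Ix - i ≤ M := by
    rcases le_total Ix 0 with h | h
    · rw [hi_def, min_eq_left h]; linarith
    · rw [hi_def, min_eq_right h]; simpa using (abs_le.mp hIb).2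
  have nIM : -Ix ≤ M := by
    have := (abs_le.mp hIb).1; linarith
  -- term bounds
  have B1 : 2 * s * (-μ * Sx) ≤ 0 := by
    have : 2 * s * (-μ * Sx) = -(2 * μ * (s * Sx)) := by ring
    rw [this, eS]
    have := mul_nonneg hμ (sq_nonneg s); linarith
  have fsr : s * Rx ≤ s * r := by
    have : s * (Rx - r) ≤ 0 := mul_nonpos_of_nonpos_of_nonneg hs pR
    linarith
  have B2 : 2 * s * (ω * Rx) ≤ ω * (s ^ 2 + r ^ 2) := by
    have h2 : 2 * (s * r) ≤ s ^ 2 + r ^ 2 := by linarith [sq_nonneg (s - r)]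
    have h3 : ω * (2 * (s * Rx)) ≤ ω * (s ^ 2 + r ^ 2) :=
      mul_le_mul_of_nonneg_left (by linarith) hω
    linarith [h3]
  have B3 : 2 * s * (-(β / N) * Sx * Ix) ≤ 2 * (β / N) * M * s ^ 2 := by
    have h1 : 2 * s * (-(β / N) * Sx * Ix) = 2 * (β / N) * ((s * Sx) * (-Ix)) := by ring
    rw [h1, eS]
    have h2 : s ^ 2 * (-Ix) ≤ s ^ 2 * M := mul_le_mul_of_nonneg_left nIM (sq_nonneg s)
    have h3 : 2 * (β / N) * (s ^ 2 * (-Ix)) ≤ 2 * (β / N) * (s ^ 2 * M) :=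
      mul_le_mul_of_nonneg_left h2 (by linarith)
    linarith [h3]
  have B4 : 2 * s * (μ * N * (1 - Vx)) ≤ 0 := by
    have h1 : 0 ≤ μ * N * (1 - Vx) :=
      mul_nonneg (mul_nonneg hμ hN.le) (by linarith)
    have := mul_nonneg h1 (neg_nonneg.mpr hs)
    linarith
  have B5 : 2 * e * ((β / N) * Sx * Ix) ≤ (β / N) * M * (2 * e ^ 2 + s ^ 2 + i ^ 2) := by
    have a1 : 0 ≤ e * s := nn e s he hs
    have a2 : 0 ≤ e * i := nn e i he hi
    have a3 : e * (s * i) ≤ 0 :=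
      mul_nonpos_of_nonpos_of_nonneg he (nn s i hs hi)
    have a4 : e * ((Sx - s) * (Ix - i)) ≤ 0 :=
      mul_nonpos_of_nonpos_of_nonneg he (mul_nonneg pS pI)
    have p1 : (e * s) * (Ix - i) ≤ (e * s) * M := mul_le_mul_of_nonneg_left pIM a1
    have p2 : (e * i) * (Sx - s) ≤ (e * i) * M := mul_le_mul_of_nonneg_left pSM a2
    have expand : e * (Sx * Ix) =
        e * (s * i) + (e * s) * (Ix - i) + (e * i) * (Sx - s) + e * ((Sx - s) * (Ix - i)) := by
      ring
    have key : e * (Sx * Ix) ≤ M * (e * s) + M * (e * i) := by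
      linarith [p1, p2, a3, a4]
    have h3 : 2 * (β / N) * (e * (Sx * Ix)) ≤ 2 * (β / N) * (M * (e * s) + M * (e * i)) :=
      mul_le_mul_of_nonneg_left key (by linarith)
    have hes : 2 * (e * s) ≤ e ^ 2 + s ^ 2 := by linarith [sq_nonneg (e - s)]
    have hei : 2 * (e * i) ≤ e ^ 2 + i ^ 2 := by linarith [sq_nonneg (e - i)]
    have hcM : 0 ≤ (β / N) * M := mul_nonneg hc hM
    linarith [h3, mul_le_mul_of_nonneg_left hes hcM, mul_le_mul_of_nonneg_left hei hcM]
  have B6 : 2 * e * (-(μ + σ) * Ex) ≤ 0 := by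
    have : 2 * e * (-(μ + σ) * Ex) = -(2 * (μ + σ) * (e * Ex)) := by ring
    rw [this, eE]
    have := mul_nonneg (by linarith : (0:ℝ) ≤ 2 * (μ + σ)) (sq_nonneg e)
    linarith
  have B7 : 2 * i * (-(μ + γ) * Ix) ≤ 0 := by
    have : 2 * i * (-(μ + γ) * Ix) = -(2 * (μ + γ) * (i * Ix)) := by ring
    rw [this, eI]
    have := mul_nonneg (by linarith : (0:ℝ) ≤ 2 * (μ + γ)) (sq_nonneg i)
    linarith
  have B8 : 2 * i * (σ * Ex) ≤ σ * (i ^ 2 + e ^ 2) := by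
    have f1 : i * Ex ≤ i * e := by
      have : i * (Ex - e) ≤ 0 := mul_nonpos_of_nonpos_of_nonneg hi pE
      linarith
    have h2 : 2 * (i * e) ≤ i ^ 2 + e ^ 2 := by linarith [sq_nonneg (i - e)]
    have h3 : σ * (2 * (i * Ex)) ≤ σ * (i ^ 2 + e ^ 2) :=
      mul_le_mul_of_nonneg_left (by linarith) hσ
    linarith
  have B9 : 2 * r * (-(μ + ω) * Rx) ≤ 0 := by
    have : 2 * r * (-(μ + ω) * Rx) = -(2 * (μ + ω) * (r * Rx)) := by ring
    rw [this, eR]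
    have := mul_nonneg (by linarith : (0:ℝ) ≤ 2 * (μ + ω)) (sq_nonneg r)
    linarith
  have B10 : 2 * r * (γ * Ix) ≤ γ * (r ^ 2 + i ^ 2) := by
    have f1 : r * Ix ≤ r * i := by
      have : r * (Ix - i) ≤ 0 := mul_nonpos_of_nonpos_of_nonneg hr pI
      linarith
    have h2 : 2 * (r * i) ≤ r ^ 2 + i ^ 2 := by linarith [sq_nonneg (r - i)]
    have h3 : γ * (2 * (r * Ix)) ≤ γ * (r ^ 2 + i ^ 2) :=
      mul_le_mul_of_nonneg_left (by linarith) hγ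
    linarith
  have B11 : 2 * r * (μ * N * Vx) ≤ 0 := by
    have h1 : 0 ≤ μ * N * Vx := mul_nonneg (mul_nonneg hμ hN.le) hV0
    have := mul_nonneg h1 (neg_nonneg.mpr hr)
    linarith
  have expandL :
      2 * s * (-μ * Sx + ω * Rx - (β / N) * Sx * Ix + μ * N * (1 - Vx))
      + 2 * e * ((β / N) * Sx * Ix - (μ + σ) * Ex)
      + 2 * i * (-(μ + γ) * Ix + σ * Ex)
      + 2 * r * (-(μ + ω) * Rx + γ * Ix + μ * N * Vx)
      = 2 * s * (-μ * Sx) + 2 * s * (ω * Rx) + 2 * s * (-(β / N) * Sx * Ix)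
        + 2 * s * (μ * N * (1 - Vx))
        + 2 * e * ((β / N) * Sx * Ix) + 2 * e * (-(μ + σ) * Ex)
        + 2 * i * (-(μ + γ) * Ix) + 2 * i * (σ * Ex)
        + 2 * r * (-(μ + ω) * Rx) + 2 * r * (γ * Ix) + 2 * r * (μ * N * Vx) := by
    ring
  have hcM : 0 ≤ (β / N) * M := mul_nonneg hc hM
  linarith [mul_nonneg hcM (sq_nonneg s), mul_nonneg hcM (sq_nonneg e),
    mul_nonneg hcM (sq_nonneg i), mul_nonneg hcM (sq_nonneg r),
    mul_nonneg hω (sq_nonneg e), mul_nonneg hω (sq_nonneg i),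
    mul_nonneg hσ (sq_nonneg s), mul_nonneg hσ (sq_nonneg r),
    mul_nonneg hγ (sq_nonneg s), mul_nonneg hγ (sq_nonneg e)]


/-- Under the SEIR system with `V t ∈ [0,1]`, each partial population lies in `[0,N]`. -/
theorem seir_populations_in_Icc
    (μ ω β σ γ N : ℝ) (S E I R V : ℝ → ℝ)
    (hμ : 0 ≤ μ) (hω : 0 ≤ ω) (hβ : 0 ≤ β) (hσ : 0 ≤ σ) (hγ : 0 ≤ γ)
    (hN : N = S 0 + E 0 + I 0 + R 0) (hNpos : 0 < N)
    (hVc : Continuous V) (hV : ∀ t, 0 ≤ t → V t ∈ Set.Icc (0 : ℝ) 1)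
    (hS : Differentiable ℝ S) (hE : Differentiable ℝ E)
    (hI : Differentiable ℝ I) (hR : Differentiable ℝ R)
    (hS' : ∀ t, 0 ≤ t → deriv S t = -μ * S t + ω * R t - (β / N) * S t * I t + μ * N * (1 - V t))
    (hE' : ∀ t, 0 ≤ t → deriv E t = (β / N) * S t * I t - (μ + σ) * E t)
    (hI' : ∀ t, 0 ≤ t → deriv I t = -(μ + γ) * I t + σ * E t)
    (hR' : ∀ t, 0 ≤ t → deriv R t = -(μ + ω) * R t + γ * I t + μ * N * V t)
    (hS0 : 0 ≤ S 0) (hE0 : 0 ≤ E 0) (hI0 : 0 ≤ I 0) (hR0 : 0 ≤ R 0) :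
    ∀ t, 0 ≤ t →
      S t ∈ Set.Icc (0 : ℝ) N ∧ E t ∈ Set.Icc (0 : ℝ) N ∧
      I t ∈ Set.Icc (0 : ℝ) N ∧ R t ∈ Set.Icc (0 : ℝ) N := by
  -- Step A: nonnegativity of all four compartments
  have nonneg : ∀ b : ℝ, 0 ≤ b →
      ∀ u ∈ Set.Icc (0:ℝ) b, 0 ≤ S u ∧ 0 ≤ E u ∧ 0 ≤ I u ∧ 0 ≤ R u := by
    intro b hb
    obtain ⟨C1, hC1⟩ := (isCompact_Icc :
      IsCompact (Icc (0:ℝ) b)).exists_bound_of_continuousOn hS.continuous.continuousOn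
    obtain ⟨C3, hC3⟩ := (isCompact_Icc :
      IsCompact (Icc (0:ℝ) b)).exists_bound_of_continuousOn hI.continuous.continuousOn
    set M : ℝ := max C1 C3 with hM_def
    have h0mem : (0:ℝ) ∈ Icc (0:ℝ) b := ⟨le_refl 0, hb⟩
    have hM : 0 ≤ M := le_trans (norm_nonneg (S 0)) (le_trans (hC1 0 h0mem) (le_max_left _ _))
    have hSb : ∀ u ∈ Icc (0:ℝ) b, |S u| ≤ M := fun u hu =>
      le_trans (hC1 u hu) (le_max_left _ _)
    have hIb : ∀ u ∈ Icc (0:ℝ) b, |I u| ≤ M := fun u hu =>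
      le_trans (hC3 u hu) (le_max_right _ _)
    set K : ℝ := ω + σ + γ + 4 * (β / N) * M with hK_def
    set G : ℝ → ℝ := fun u =>
      (min (S u) 0) ^ 2 + (min (E u) 0) ^ 2 + (min (I u) 0) ^ 2 + (min (R u) 0) ^ 2 with hG_def
    set G' : ℝ → ℝ := fun u =>
      2 * min (S u) 0 * deriv S u + 2 * min (E u) 0 * deriv E u
        + 2 * min (I u) 0 * deriv I u + 2 * min (R u) 0 * deriv R u with hG'_def
    have hGd : ∀ u : ℝ, HasDerivAt G (G' u) u := by
      intro u
      have c1 : HasDerivAt (fun t => (min (S t) 0) ^ 2) (2 * min (S u) 0 * deriv S u) u :=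
        (negpart_sq_hasDerivAt (S u)).comp u (hS u).hasDerivAt
      have c2 : HasDerivAt (fun t => (min (E t) 0) ^ 2) (2 * min (E u) 0 * deriv E u) u :=
        (negpart_sq_hasDerivAt (E u)).comp u (hE u).hasDerivAt
      have c3 : HasDerivAt (fun t => (min (I t) 0) ^ 2) (2 * min (I u) 0 * deriv I u) u :=
        (negpart_sq_hasDerivAt (I u)).comp u (hI u).hasDerivAt
      have c4 : HasDerivAt (fun t => (min (R t) 0) ^ 2) (2 * min (R u) 0 * deriv R u) u :=
        (negpart_sq_hasDerivAt (R u)).comp u (hR u).hasDerivAt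
      exact ((c1.add c2).add c3).add c4
    have hGcont : ContinuousOn G (Icc 0 b) :=
      (Differentiable.continuous (fun u => (hGd u).differentiableAt)).continuousOn
    have hbound : ∀ x ∈ Ico (0:ℝ) b, G' x ≤ K * G x + 0 := by
      intro x hx
      have hx0 : (0:ℝ) ≤ x := hx.1
      have hxm : x ∈ Icc (0:ℝ) b := ⟨hx.1, hx.2.le⟩
      have hVx := hV x hx0
      have := seir_key_ineq μ ω β σ γ N M (S x) (E x) (I x) (R x) (V x)
        hμ hω hβ hσ hγ hNpos hM hVx.1 hVx.2 (hSb x hxm) (hIb x hxm)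
      simp only [hG'_def, hG_def, hK_def]
      rw [hS' x hx0, hE' x hx0, hI' x hx0, hR' x hx0]
      linarith [this]
    have hG0 : G 0 ≤ 0 := by
      simp only [hG_def]
      rw [min_eq_right hS0, min_eq_right hE0, min_eq_right hI0, min_eq_right hR0]
      norm_num
    have hGle : ∀ x ∈ Icc (0:ℝ) b, G x ≤ gronwallBound 0 K 0 (x - 0) :=
      le_gronwallBound_of_liminf_deriv_right_le hGcont
        (fun x _ r hr => ((hGd x).hasDerivWithinAt).liminf_right_slope_le hr)
        hG0 hbound
    intro u hu
    have hGu : G u ≤ 0 := by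
      have := hGle u hu
      rwa [sub_zero, gronwallBound_ε0_δ0] at this
    have nn : ∀ x : ℝ, (min x 0) ^ 2 ≤ 0 → 0 ≤ x := by
      intro x hx
      have h1 : (min x 0) ^ 2 = 0 := le_antisymm hx (sq_nonneg _)
      have h2 : min x 0 = 0 := by
        exact pow_eq_zero_iff (n := 2) (by norm_num) |>.mp h1
      exact min_eq_right_iff.mp h2
    refine ⟨nn _ ?_, nn _ ?_, nn _ ?_, nn _ ?_⟩ <;>
      simp only [hG_def] at hGu <;>
      nlinarith [sq_nonneg (min (S u) 0), sq_nonneg (min (E u) 0),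
        sq_nonneg (min (I u) 0), sq_nonneg (min (R u) 0)]
  -- Step B: total population is constant equal to N
  have total : ∀ t : ℝ, 0 ≤ t → S t + E t + I t + R t = N := by
    intro t ht
    set D : ℝ → ℝ := fun u => S u + E u + I u + R u - N with hD_def
    have hDd : ∀ u : ℝ, 0 ≤ u → HasDerivAt D (-(μ * D u)) u := by
      intro u hu
      have h1 : HasDerivAt D (deriv S u + deriv E u + deriv I u + deriv R u) u := by
        exact ((((hS u).hasDerivAt.add (hE u).hasDerivAt).add
          (hI u).hasDerivAt).add (hR u).hasDerivAt).sub_const N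
      have h2 : deriv S u + deriv E u + deriv I u + deriv R u = -(μ * D u) := by
        rw [hS' u hu, hE' u hu, hI' u hu, hR' u hu, hD_def]
        ring
      rwa [h2] at h1
    have hcont : ContinuousOn D (Icc 0 t) :=
      ((((hS.continuous.add hE.continuous).add hI.continuous).add
        hR.continuous).sub continuous_const).continuousOn
    have hD0 : ‖D 0‖ ≤ 0 := by
      simp only [hD_def]
      rw [hN]; simp
    have := norm_le_gronwallBound_of_norm_deriv_right_le (f := D)
      (f' := fun u => -(μ * D u)) (δ := 0) (K := μ) (ε := 0) (a := 0) (b := t)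
      hcont (fun u hu => (hDd u hu.1).hasDerivWithinAt) hD0
      (fun u _ => by
        rw [norm_neg, norm_mul, Real.norm_eq_abs μ, abs_of_nonneg hμ]
        simp)
      t ⟨ht, le_refl t⟩
    rw [sub_zero, gronwallBound_ε0_δ0] at this
    have hD : D t = 0 := by
      have := norm_le_zero_iff.mp this
      exact this
    simp only [hD_def] at hD
    linarith
  intro t ht
  obtain ⟨hSn, hEn, hIn, hRn⟩ := nonneg t ht t ⟨ht, le_refl t⟩
  have htot := total t ht
  exact ⟨⟨hSn, by linarith⟩, ⟨hEn, by linarith⟩, ⟨hIn, by linarith⟩, ⟨hRn, by linarith⟩⟩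
end

section
/- If the vaccination is chosen as V(t) = (1/(μN))(ωR(t) + (g - βI(t)/N)S(t) + μN) with g ≥ 0 and μ > 0, then the susceptible population satisfies S'(t) = -(μ+g)S(t), hence S(t) = e^{-(μ+g)t} S(0) and S(t) → 0 as t → ∞. -/
/-- Under the feedback-linearizing vaccination law (26), the susceptible population
decays exponentially: `S' = -(μ+g) S`, `S t = exp (-(μ+g) t) * S 0` and `S → 0`. -/
theorem seir_susceptible_exponential_decay
    (μ ω β σ γ N g : ℝ) (S E I R V : ℝ → ℝ)
    (hμ : 0 < μ) (hω : 0 ≤ ω) (hβ : 0 ≤ β) (hσ : 0 ≤ σ) (hγ : 0 ≤ γ)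
    (hN : 0 < N) (hg : 0 ≤ g)
    (hS : Differentiable ℝ S)
    (hS' : ∀ t, deriv S t = -μ * S t + ω * R t - (β / N) * S t * I t + μ * N * (1 - V t))
    (hV : ∀ t, V t = (1 / (μ * N)) * (ω * R t + (g - β * I t / N) * S t + μ * N)) :
    (∀ t, deriv S t = -(μ + g) * S t) ∧
    (∀ t, 0 ≤ t → S t = Real.exp (-(μ + g) * t) * S 0) ∧
    Filter.Tendsto S Filter.atTop (nhds 0) := by
  have hμN : μ * N ≠ 0 := by positivity
  have hode : ∀ t, deriv S t = -(μ + g) * S t := by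
    intro t
    rw [hS' t, hV t]
    field_simp
    ring
  have hsol : ∀ t, S t = Real.exp (-(μ + g) * t) * S 0 := by
    have key : ∀ t, S t * Real.exp ((μ + g) * t)
        = S 0 * Real.exp ((μ + g) * 0) := by
      intro t
      apply is_const_of_deriv_eq_zero (f := fun t => S t * Real.exp ((μ + g) * t))
      · exact hS.mul (by fun_prop)
      · intro x
        have h1 : HasDerivAt S (-(μ + g) * S x) x := by
          rw [← hode x]; exact (hS x).hasDerivAt
        have h2 : HasDerivAt (fun t => Real.exp ((μ + g) * t))
            (Real.exp ((μ + g) * x) * (μ + g)) x := by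
          simpa [Function.comp_def] using (Real.hasDerivAt_exp ((μ + g) * x)).comp x
            ((hasDerivAt_id x).const_mul (μ + g))
        have := (h1.mul h2).deriv
        rw [show (fun t => S t * Real.exp ((μ + g) * t)) = (S * fun t => Real.exp ((μ + g) * t)) from rfl, this]; ring
    intro t
    have := key t
    simp only [mul_comm] at this
    have h0 : S t * Real.exp ((μ + g) * t) = S 0 := by simpa using key t
    have : S t = S 0 / Real.exp ((μ + g) * t) := by
      field_simp at h0 ⊢; linarith [h0]
    rw [this, neg_mul, Real.exp_neg]
    field_simp
  refine ⟨hode, fun t _ => hsol t, ?_⟩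
  have hlim : Filter.Tendsto (fun t => Real.exp (-(μ + g) * t) * S 0)
      Filter.atTop (nhds 0) := by
    have hc : -(μ + g) < 0 := by linarith
    have h2 : Filter.Tendsto (fun t : ℝ => -(μ + g) * t) Filter.atTop Filter.atBot :=
      Filter.tendsto_id.const_mul_atTop_of_neg hc
    have := (Real.tendsto_exp_atBot).comp h2
    simpa using this.mul_const (S 0)
  exact hlim.congr (fun t => (hsol t).symm)
end

section
/- If I satisfies I'(t) = -(μ+γ)I(t) + σE(t) with E(t) ≤ e^{-(μ+σ)t}E(0) + βN(e^{-(μ+g)t} - e^{-(μ+σ)t})/(σ-g), I(t) ≥ 0, E(t) ≥ 0, and the parameters satisfy μ, σ, γ, β > 0, g ≥ 0, γ ≠ σ, g ≠ σ, g ≠ γ, then I(t) → 0 as t → ∞ (exponentially). -/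
/-- The infectious population converges to zero under the exponentially
decaying bound on the infected population. -/
theorem seir_infectious_to_zero
    (μ σ γ β N g : ℝ) (E I : ℝ → ℝ)
    (hμ : 0 < μ) (hσ : 0 < σ) (hγ : 0 < γ) (hβ : 0 < β) (hN : 0 < N) (hg : 0 ≤ g)
    (hγσ : γ ≠ σ) (hgσ : g ≠ σ) (hgγ : g ≠ γ)
    (hE0 : 0 ≤ E 0) (hI0 : 0 ≤ I 0)
    (hInn : ∀ t, 0 ≤ t → 0 ≤ I t) (hEnn : ∀ t, 0 ≤ t → 0 ≤ E t)
    (hEb : ∀ t, 0 ≤ t →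
      E t ≤ Real.exp (-(μ + σ) * t) * E 0 +
        β * N * (Real.exp (-(μ + g) * t) - Real.exp (-(μ + σ) * t)) / (σ - g))
    (hI' : ∀ t, 0 ≤ t → HasDerivAt I (-(μ + γ) * I t + σ * E t) t) :
    Filter.Tendsto I Filter.atTop (nhds 0) := by
  have hσg : σ - g ≠ 0 := sub_ne_zero.mpr (Ne.symm hgσ)
  set m : ℝ := min g σ with hm
  have hm0 : 0 ≤ m := le_min hg hσ.le
  set a : ℝ := μ + m with ha
  have ha0 : 0 < a := by positivity
  set C : ℝ := E 0 + 2 * β * N / |σ - g| with hC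
  have habs0 : 0 < |σ - g| := abs_pos.mpr hσg
  have hC0 : 0 ≤ C := by positivity
  set b : ℝ := min (a / 2) (μ + γ) with hb
  have hb0 : 0 < b := lt_min (by linarith) (by linarith)
  have hab : b < a := lt_of_le_of_lt (min_le_left _ _) (by linarith)
  have hbγ : b ≤ μ + γ := min_le_right _ _
  have hab2 : 0 < a - b := by linarith
  -- Step 1: E t ≤ C * exp(-a t)
  have hEC : ∀ t, 0 ≤ t → E t ≤ C * Real.exp (-a * t) := by
    intro t ht
    have h1 : Real.exp (-(μ + σ) * t) ≤ Real.exp (-a * t) := by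
      apply Real.exp_le_exp.mpr
      have : m ≤ σ := min_le_right _ _
      nlinarith
    have h2 : Real.exp (-(μ + g) * t) ≤ Real.exp (-a * t) := by
      apply Real.exp_le_exp.mpr
      have : m ≤ g := min_le_left _ _
      nlinarith
    have he1 : 0 < Real.exp (-(μ + σ) * t) := Real.exp_pos _
    have he2 : 0 < Real.exp (-(μ + g) * t) := Real.exp_pos _
    have h3 : |Real.exp (-(μ + g) * t) - Real.exp (-(μ + σ) * t)| ≤ Real.exp (-a * t) :=
      abs_le.mpr ⟨by linarith, by linarith⟩
    have h4 : β * N * (Real.exp (-(μ + g) * t) - Real.exp (-(μ + σ) * t)) / (σ - g)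
        ≤ 2 * β * N / |σ - g| * Real.exp (-a * t) := by
      calc β * N * (Real.exp (-(μ + g) * t) - Real.exp (-(μ + σ) * t)) / (σ - g)
          ≤ |β * N * (Real.exp (-(μ + g) * t) - Real.exp (-(μ + σ) * t)) / (σ - g)| :=
            le_abs_self _
        _ = β * N * |Real.exp (-(μ + g) * t) - Real.exp (-(μ + σ) * t)| / |σ - g| := by
            rw [abs_div, abs_mul, abs_mul, abs_of_pos hβ, abs_of_pos hN]
        _ ≤ β * N * Real.exp (-a * t) / |σ - g| := by gcongr
        _ ≤ 2 * β * N / |σ - g| * Real.exp (-a * t) := by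
            rw [div_mul_eq_mul_div]
            gcongr
            nlinarith [Real.exp_pos (-a * t)]
    have h5 : Real.exp (-(μ + σ) * t) * E 0 ≤ Real.exp (-a * t) * E 0 :=
      mul_le_mul_of_nonneg_right h1 hE0
    calc E t ≤ _ := hEb t ht
      _ ≤ Real.exp (-a * t) * E 0 + 2 * β * N / |σ - g| * Real.exp (-a * t) := by linarith
      _ = C * Real.exp (-a * t) := by ring
  -- Step 2: the auxiliary function is antitone
  set D : ℝ := σ * C / (a - b) with hD
  have hD0 : 0 ≤ D := by positivity
  set F : ℝ → ℝ := fun t => Real.exp (b * t) * I t + D * Real.exp ((b - a) * t) with hF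
  have hFd : ∀ t, 0 ≤ t → HasDerivAt F
      (Real.exp (b * t) * b * I t
        + Real.exp (b * t) * (-(μ + γ) * I t + σ * E t)
        + D * (Real.exp ((b - a) * t) * (b - a))) t := by
    intro t ht
    have h1 : HasDerivAt (fun s => Real.exp (b * s)) (Real.exp (b * t) * b) t := by
      simpa using ((hasDerivAt_id t).const_mul b).exp
    have h2 : HasDerivAt (fun s => Real.exp ((b - a) * s)) (Real.exp ((b - a) * t) * (b - a)) t := by
      simpa using ((hasDerivAt_id t).const_mul (b - a)).exp
    exact (h1.mul (hI' t ht)).add (h2.const_mul D)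
  have hAnti : AntitoneOn F (Set.Ici (0 : ℝ)) := by
    apply antitoneOn_of_deriv_nonpos (convex_Ici 0)
    · intro t ht
      exact ((hFd t ht).continuousAt).continuousWithinAt
    · intro t ht
      rw [interior_Ici] at ht
      exact (hFd t (le_of_lt ht)).differentiableAt.differentiableWithinAt
    · intro t ht
      rw [interior_Ici] at ht
      rw [(hFd t ht.le).deriv]
      have hIt := hInn t ht.le
      have hEt := hEC t ht.le
      have hex : Real.exp (b * t) * Real.exp (-a * t) = Real.exp ((b - a) * t) := by
        rw [← Real.exp_add]; ring_nf
      have heb : 0 < Real.exp (b * t) := Real.exp_pos _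
      have hDba : D * (a - b) = σ * C := by
        rw [hD, div_mul_cancel₀ _ hab2.ne']
      have hDQ : D * (Real.exp ((b - a) * t) * (b - a)) = -(σ * C * Real.exp ((b - a) * t)) := by
        linear_combination (-Real.exp ((b - a) * t)) * hDba
      have hPE : Real.exp (b * t) * (σ * E t) ≤ σ * C * Real.exp ((b - a) * t) := by
        calc Real.exp (b * t) * (σ * E t)
            = σ * Real.exp (b * t) * E t := by ring
          _ ≤ σ * Real.exp (b * t) * (C * Real.exp (-a * t)) :=
              mul_le_mul_of_nonneg_left hEt (by positivity)
          _ = σ * C * (Real.exp (b * t) * Real.exp (-a * t)) := by ring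
          _ = σ * C * Real.exp ((b - a) * t) := by rw [hex]
      have hNeg : Real.exp (b * t) * b * I t + Real.exp (b * t) * (-(μ + γ) * I t) ≤ 0 := by
        have h := mul_nonneg (mul_nonneg (by linarith : (0:ℝ) ≤ μ + γ - b) heb.le) hIt
        nlinarith [h]
      have hsplit : Real.exp (b * t) * (-(μ + γ) * I t + σ * E t)
          = Real.exp (b * t) * (-(μ + γ) * I t) + Real.exp (b * t) * (σ * E t) := by ring
      linarith [hNeg, hPE, hDQ, hsplit]
  -- Step 3: I t ≤ (I 0 + D) * exp(-b t)
  have hIb : ∀ t, 0 ≤ t → I t ≤ (I 0 + D) * Real.exp (-b * t) := by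
    intro t ht
    have h1 : F t ≤ F 0 := hAnti (Set.self_mem_Ici) ht ht
    have h3 : Real.exp (b * t) * I t ≤ I 0 + D := by
      have h4 : 0 ≤ D * Real.exp ((b - a) * t) := by positivity
      simp only [hF, mul_zero, Real.exp_zero, one_mul, mul_one] at h1
      linarith
    rw [neg_mul, Real.exp_neg, ← div_eq_mul_inv, le_div_iff₀ (Real.exp_pos _)]
    nlinarith [h3]
  -- Step 4: squeeze
  have hg0 : Filter.Tendsto (fun t : ℝ => (I 0 + D) * Real.exp (-b * t))
      Filter.atTop (nhds 0) := by
    have h1 : Filter.Tendsto (fun t : ℝ => b * t) Filter.atTop Filter.atTop :=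
      Filter.Tendsto.const_mul_atTop hb0 Filter.tendsto_id
    have h2 : Filter.Tendsto (fun t : ℝ => Real.exp (-(b * t))) Filter.atTop (nhds 0) :=
      Real.tendsto_exp_neg_atTop_nhds_zero.comp h1
    have h3 : Filter.Tendsto (fun t : ℝ => (I 0 + D) * Real.exp (-(b * t)))
        Filter.atTop (nhds ((I 0 + D) * 0)) := h2.const_mul _
    rw [mul_zero] at h3
    have h4 : (fun t : ℝ => (I 0 + D) * Real.exp (-b * t))
        = fun t : ℝ => (I 0 + D) * Real.exp (-(b * t)) := by
      funext t; rw [neg_mul]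
    rw [h4]
    exact h3
  apply squeeze_zero' (Filter.eventually_atTop.mpr ⟨0, fun t ht => hInn t ht⟩)
    (Filter.eventually_atTop.mpr ⟨0, fun t ht => hIb t ht⟩) hg0
end

section
/- Assume σ = γ > 0, μ > 0, β > 0, ω ≥ 0 and (μ+σ)² < σβ. Then the point (S*, E*, I*, R*) with S* = ((μ+σ)²/(σβ))N, R* = σ(σβ-(μ+σ)²)N/(β((μ+σ)²+ω(μ+2σ))), I* = ((μ+ω)/σ)R*, E* = (1+μ/σ)I* is an equilibrium of the vaccination-free SEIR system, i.e., all four right-hand sides vanish there, and each component is positive. -/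
/-- The endemic equilibrium of the vaccination-free SEIR system with `σ = γ`. -/
theorem seir_endemic_equilibrium
    (μ σ ω β N Sstar Estar Istar Rstar : ℝ)
    (hμ : 0 < μ) (hσ : 0 < σ) (hβ : 0 < β) (hω : 0 ≤ ω) (hN : 0 < N)
    (hcond : (μ + σ) ^ 2 < σ * β)
    (hSstar : Sstar = ((μ + σ) ^ 2 / (σ * β)) * N)
    (hRstar : Rstar = σ * (σ * β - (μ + σ) ^ 2) * N / (β * ((μ + σ) ^ 2 + ω * (μ + 2 * σ))))
    (hIstar : Istar = ((μ + ω) / σ) * Rstar)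
    (hEstar : Estar = (1 + μ / σ) * Istar) :
    μ * Sstar - ω * Rstar + (β / N) * Sstar * Istar = μ * N ∧
    (β / N) * Sstar * Istar = (μ + σ) * Estar ∧
    (μ + σ) * Istar = σ * Estar ∧
    (μ + ω) * Rstar = σ * Istar ∧
    0 < Sstar ∧ 0 < Estar ∧ 0 < Istar ∧ 0 < Rstar := by
  have hD : 0 < (μ + σ) ^ 2 + ω * (μ + 2 * σ) := by positivity
  have hD' : (μ + σ) ^ 2 + ω * (μ + 2 * σ) ≠ 0 := ne_of_gt hD
  have hcond' : 0 < σ * β - (μ + σ) ^ 2 := by linarith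
  have hR : 0 < Rstar := by rw [hRstar]; positivity
  have hI : 0 < Istar := by rw [hIstar]; positivity
  have hE : 0 < Estar := by rw [hEstar]; positivity
  have hS : 0 < Sstar := by rw [hSstar]; positivity
  subst hSstar hRstar hIstar hEstar
  refine ⟨?_, ?_, ?_, ?_, hS, hE, hI, hR⟩ <;>
    field_simp <;> ring
end

section
/- If μ > 0, ω > -μ, σ > 0, and 0 ≤ β < (μ+σ)²/σ, then all roots of the polynomial (s+μ)(s+μ+ω)((s+μ+σ)² - σβ) have negative real part; i.e., the disease-free equilibrium of the vaccination-free SEIR model (with σ = γ) is locally asymptotically stable. -/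
/-- Local asymptotic stability of the disease-free equilibrium: all roots of the
characteristic polynomial have negative real part. -/
theorem seir_disease_free_stable
    (μ ω σ β : ℝ)
    (hμ : 0 < μ) (hω : -μ < ω) (hσ : 0 < σ) (hβ0 : 0 ≤ β) (hβ : β < (μ + σ) ^ 2 / σ) :
    ∀ s : ℂ,
      (s + (μ : ℂ)) * (s + (μ : ℂ) + (ω : ℂ)) *
        ((s + (μ : ℂ) + (σ : ℂ)) ^ 2 - (σ : ℂ) * (β : ℂ)) = 0 →
      s.re < 0 := by
  have hσβ : σ * β < (μ + σ) ^ 2 := by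
    have := (lt_div_iff₀ hσ).mp hβ
    nlinarith
  intro s hs
  rcases mul_eq_zero.mp hs with h | h
  · rcases mul_eq_zero.mp h with h1 | h1
    · have : s.re + μ = 0 := by
        have := congrArg Complex.re h1
        simpa using this
      linarith
    · have : s.re + μ + ω = 0 := by
        have := congrArg Complex.re h1
        simpa using this
      linarith
  · have h' : (s + (μ : ℂ) + (σ : ℂ)) ^ 2 = (σ : ℂ) * (β : ℂ) := sub_eq_zero.mp h
    have hre := congrArg Complex.re h'
    have him := congrArg Complex.im h'
    simp [pow_two, Complex.mul_re, Complex.mul_im, Complex.add_re, Complex.add_im] at hre him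
    by_contra hc
    push_neg at hc
    have hpos : 0 < s.re + μ + σ := by linarith
    have hb : s.im = 0 := by
      rcases mul_eq_zero.mp (by linarith : (s.re + μ + σ) * s.im = 0) with h0 | h0
      · linarith
      · exact h0
    rw [hb] at hre
    nlinarith
end
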